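/- There is a constant C > 0 such that the following holds: for every n, every cubic form α : 𝔽₂ⁿ → 𝔽₂, and all finite subsets A, B ⊆ 𝔽₂ⁿ with 1 ≤ |A| ≤ |B|, if every proper additive quadruple (x, x', y, y') with x, x' ∈ A, y, y' ∈ B satisfies α(x + x') = 1, then |A + B| ≥ C · |A|^{6/5}. -/

import Mathlib

open Pointwise Finset

/-- A cubic form on `𝔽₂ⁿ`: a function of the form
`α(x) = Σ_{1 ≤ i ≤ j ≤ k ≤ n} α_{ijk} x_i x_j x_k` with coefficients in `𝔽₂`. -/
def IsCubicForm {n : ℕ} (α : (Fin n → ZMod 2) → ZMod 2) : Prop :=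
  ∃ c : Fin n → Fin n → Fin n → ZMod 2,
    ∀ x, α x = ∑ i, ∑ j, ∑ k, if i ≤ j ∧ j ≤ k then c i j k * x i * x j * x k else 0


private lemma z2_add_self (t : ZMod 2) : t + t = 0 := by revert t; decide

private lemma six_smul_z2 (t : ZMod 2) : (6 : ℕ) • t = 0 := by revert t; decide

/-- The set of ordered pairs `(a,b)` with `a < b` in `Fin 6`. -/
private def ltPairs : Finset (Fin 6 × Fin 6) :=
  Finset.univ.filter (fun p : Fin 6 × Fin 6 => p.1 < p.2)

private lemma key_scalar (x y z : Fin 6 → ZMod 2) (hx : ∑ a, x a = 0)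
    (hy : ∑ a, y a = 0) (hz : ∑ a, z a = 0) :
    ∑ p ∈ ltPairs, (x p.1 + x p.2) * (y p.1 + y p.2) * (z p.1 + z p.2) = 0 := by
  classical
  set g : Fin 6 → Fin 6 → ZMod 2 := fun a b =>
    x a * y a * z a + x a * y a * z b + x a * y b * z a + x a * y b * z b with hg
  have expand : ∀ a b : Fin 6,
      (x a + x b) * (y a + y b) * (z a + z b) = g a b + g b a := by
    intro a b; simp only [hg]; ring
  -- sum over all ordered pairs
  have total : ∑ a : Fin 6, ∑ b : Fin 6, g a b = 0 := by
    simp only [hg]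
    have e1 : ∀ a : Fin 6, ∑ b : Fin 6, (x a * y a * z a + x a * y a * z b
        + x a * y b * z a + x a * y b * z b)
        = x a * (∑ b : Fin 6, y b * z b) := by
      intro a
      rw [Finset.sum_add_distrib, Finset.sum_add_distrib, Finset.sum_add_distrib]
      have t1 : ∑ _b : Fin 6, x a * y a * z a = 0 := by
        rw [Finset.sum_const, Finset.card_univ]
        simpa using six_smul_z2 (x a * y a * z a)
      have t2 : ∑ b : Fin 6, x a * y a * z b = 0 := by
        rw [← Finset.mul_sum, hz, mul_zero]
      have t3 : ∑ b : Fin 6, x a * y b * z a = 0 := by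
        have h : ∀ b, x a * y b * z a = (x a * z a) * y b := by intro b; ring
        simp_rw [h]; rw [← Finset.mul_sum, hy, mul_zero]
      have t4 : ∑ b : Fin 6, x a * y b * z b = x a * (∑ b : Fin 6, y b * z b) := by
        rw [Finset.mul_sum]; exact Finset.sum_congr rfl (fun b _ => by ring)
      rw [t1, t2, t3, t4]; simp
    rw [Finset.sum_congr rfl (fun a _ => e1 a), ← Finset.sum_mul, hx, zero_mul]
  -- diagonal
  have diag : ∑ a : Fin 6, g a a = 0 := by
    simp only [hg]
    refine Finset.sum_eq_zero (fun a _ => ?_)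
    have : x a * y a * z a + x a * y a * z a + x a * y a * z a + x a * y a * z a = 0 := by
      rw [z2_add_self, zero_add, z2_add_self]
    simpa using this
  -- split all pairs into diag, lt, gt
  have hsets : (Finset.univ : Finset (Fin 6 × Fin 6))
      = ((Finset.univ.filter (fun p : Fin 6 × Fin 6 => p.1 = p.2)) ∪
        (ltPairs ∪ (Finset.univ.filter (fun p : Fin 6 × Fin 6 => p.2 < p.1)))) := by
    ext p
    simp only [Finset.mem_union, Finset.mem_filter, Finset.mem_univ, true_and, ltPairs]
    rcases lt_trichotomy p.1 p.2 with h | h | h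
    · simp [h]
    · simp [h]
    · simp [h]
  have d1 : Disjoint (Finset.univ.filter (fun p : Fin 6 × Fin 6 => p.1 = p.2))
      (ltPairs ∪ (Finset.univ.filter (fun p : Fin 6 × Fin 6 => p.2 < p.1))) := by
    simp only [Finset.disjoint_left, Finset.mem_filter, Finset.mem_union, ltPairs,
      Finset.mem_univ, true_and]
    rintro p h (h2 | h2)
    · exact absurd h (ne_of_lt h2)
    · exact absurd h (ne_of_gt h2)
  have d2 : Disjoint ltPairs (Finset.univ.filter (fun p : Fin 6 × Fin 6 => p.2 < p.1)) := by
    simp only [Finset.disjoint_left, Finset.mem_filter, ltPairs, Finset.mem_univ, true_and]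
    intro p h h2
    exact absurd h (not_lt.mpr (le_of_lt h2))
  have totsplit : (0 : ZMod 2) = (∑ a : Fin 6, g a a)
      + (∑ p ∈ ltPairs, g p.1 p.2
        + ∑ p ∈ Finset.univ.filter (fun p : Fin 6 × Fin 6 => p.2 < p.1), g p.1 p.2) := by
    have h0 : ∑ p ∈ (Finset.univ : Finset (Fin 6 × Fin 6)), g p.1 p.2 = 0 := by
      rw [Fintype.sum_prod_type]
      exact total
    rw [← h0]
    conv_lhs => rw [hsets]
    rw [Finset.sum_union d1, Finset.sum_union d2]
    have hd : ∑ p ∈ Finset.univ.filter (fun p : Fin 6 × Fin 6 => p.1 = p.2), g p.1 p.2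
        = ∑ a : Fin 6, g a a := by
      refine Finset.sum_nbij' (fun p => p.1) (fun a => (a, a)) ?_ ?_ ?_ ?_ ?_ <;>
        simp +contextual [Finset.mem_filter, Prod.ext_iff]
    rw [hd]
  -- swap the gt-sum
  have swapsum : ∑ p ∈ Finset.univ.filter (fun p : Fin 6 × Fin 6 => p.2 < p.1), g p.1 p.2
      = ∑ p ∈ ltPairs, g p.2 p.1 := by
    refine (Finset.sum_nbij' (fun p => Prod.swap p) (fun p => Prod.swap p) ?_ ?_ ?_ ?_ ?_) <;>
      simp [ltPairs]
  have main : ∑ p ∈ ltPairs, (g p.1 p.2 + g p.2 p.1) = 0 := by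
    rw [Finset.sum_add_distrib]
    have := totsplit
    rw [diag, zero_add, swapsum] at this
    exact this.symm
  calc ∑ p ∈ ltPairs, (x p.1 + x p.2) * (y p.1 + y p.2) * (z p.1 + z p.2)
      = ∑ p ∈ ltPairs, (g p.1 p.2 + g p.2 p.1) :=
        Finset.sum_congr rfl (fun p _ => expand p.1 p.2)
    _ = 0 := main

/-- Key algebraic fact: for a cubic form `α` and any six vectors summing to zero,
the sum of `α` over all fifteen pairwise sums vanishes. -/
private lemma cubic_pairsum {n : ℕ} {α : (Fin n → ZMod 2) → ZMod 2}
    (hα : IsCubicForm α) (u : Fin 6 → (Fin n → ZMod 2)) (hu : ∑ i, u i = 0) :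
    ∑ p ∈ ltPairs, α (u p.1 + u p.2) = 0 := by
  classical
  obtain ⟨c, hc⟩ := hα
  have step1 : ∑ p ∈ ltPairs, α (u p.1 + u p.2)
      = ∑ p ∈ ltPairs, ∑ i, ∑ j, ∑ k, if i ≤ j ∧ j ≤ k then
          c i j k * (u p.1 + u p.2) i * (u p.1 + u p.2) j * (u p.1 + u p.2) k else 0 :=
    Finset.sum_congr rfl (fun p _ => hc _)
  rw [step1, Finset.sum_comm]
  refine Finset.sum_eq_zero (fun i _ => ?_)
  rw [Finset.sum_comm]
  refine Finset.sum_eq_zero (fun j _ => ?_)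
  rw [Finset.sum_comm]
  refine Finset.sum_eq_zero (fun k _ => ?_)
  by_cases h : i ≤ j ∧ j ≤ k
  · simp only [h, if_true]
    have hxi : ∑ a, u a i = 0 := by
      have := congrFun hu i
      simpa using this
    have hxj : ∑ a, u a j = 0 := by
      have := congrFun hu j
      simpa using this
    have hxk : ∑ a, u a k = 0 := by
      have := congrFun hu k
      simpa using this
    have key := key_scalar (fun a => u a i) (fun a => u a j) (fun a => u a k) hxi hxj hxk
    calc ∑ p ∈ ltPairs, c i j k * (u p.1 + u p.2) i * (u p.1 + u p.2) j * (u p.1 + u p.2) k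
        = c i j k * ∑ p ∈ ltPairs,
            (u p.1 i + u p.2 i) * (u p.1 j + u p.2 j) * (u p.1 k + u p.2 k) := by
          rw [Finset.mul_sum]
          exact Finset.sum_congr rfl (fun p _ => by simp [Pi.add_apply]; ring)
      _ = 0 := by rw [key, mul_zero]
  · simp [h]


variable {n : ℕ}

private lemma z2_cancel : ∀ u v : ZMod 2, u + (u + v) = v := by decide

private lemma pi_add_self (w : Fin n → ZMod 2) : w + w = 0 := by
  funext i
  have h : ∀ t : ZMod 2, t + t = 0 := by decide
  simpa using h (w i)

private lemma pi_cancel (u v : Fin n → ZMod 2) : u + (u + v) = v := by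
  funext i
  simpa using z2_cancel (u i) (v i)

/-- fibre of the A×B sum decomposition -/
private def Xt (A B : Finset (Fin n → ZMod 2)) (t : Fin n → ZMod 2) :
    Finset (Fin n → ZMod 2) :=
  A.filter (fun a => a + t ∈ B)

private lemma sum_r (A B : Finset (Fin n → ZMod 2)) :
    ∑ t ∈ A + B, (Xt A B t).card = A.card * B.card := by
  classical
  rw [← Finset.card_product]
  rw [Finset.card_eq_sum_card_fiberwise
    (f := fun p : (Fin n → ZMod 2) × (Fin n → ZMod 2) => p.1 + p.2) (t := A + B)
    (fun p hp => by
      rw [Finset.mem_coe, Finset.mem_product] at hp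
      exact Finset.add_mem_add hp.1 hp.2)]
  refine Finset.sum_congr rfl (fun t _ => ?_)
  refine Finset.card_nbij (fun a => (a, a + t)) ?_ ?_ ?_
  · intro a ha
    simp only [Xt, Finset.mem_coe, Finset.mem_filter] at ha
    simp only [Finset.mem_coe, Finset.mem_filter, Finset.mem_product]
    refine ⟨⟨ha.1, ha.2⟩, ?_⟩
    exact pi_cancel a t
  · intro a _ a' _ h
    exact (Prod.ext_iff.mp h).1
  · intro p hp
    simp only [Finset.coe_filter, Finset.mem_product, Set.mem_setOf_eq] at hp
    have hb : p.2 = p.1 + t := by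
      rw [← hp.2]; exact (pi_cancel p.1 p.2).symm
    refine ⟨p.1, ?_, ?_⟩
    · have hmem : p.1 ∈ Xt A B t := by
        refine Finset.mem_filter.mpr ⟨hp.1.1, ?_⟩
        rw [← hb]; exact hp.1.2
      simpa using hmem
    · exact Prod.ext rfl hb.symm

/-- 6-tuples from a finset with zero sum. -/
private def Zfun (X : Finset (Fin n → ZMod 2)) : Finset (Fin 6 → (Fin n → ZMod 2)) :=
  (Fintype.piFinset (fun _ : Fin 6 => X)).filter (fun u => ∑ i, u i = 0)

private def tri (X : Finset (Fin n → ZMod 2)) : Finset (Fin 3 → (Fin n → ZMod 2)) :=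
  Fintype.piFinset (fun _ : Fin 3 => X)

private def r3 (X : Finset (Fin n → ZMod 2)) (w : Fin n → ZMod 2) : ℕ :=
  ((tri X).filter (fun v => ∑ i, v i = w)).card

-- collision class bound
private lemma collision_class (X : Finset (Fin n → ZMod 2)) (a b : Fin 6) (hab : a ≠ b) :
    ((Zfun X).filter (fun u => u a = u b)).card ≤ X.card ^ 4 := by
  classical
  obtain ⟨e, hea, heb⟩ : ∃ e : Fin 6, e ≠ a ∧ e ≠ b :=
    (by revert a b; decide : ∀ a b : Fin 6, ∃ e : Fin 6, e ≠ a ∧ e ≠ b) a b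
  set T : Finset (Fin 6 → (Fin n → ZMod 2)) :=
    Fintype.piFinset (fun i : Fin 6 => if i = a ∨ i = e then ({0} : Finset (Fin n → ZMod 2)) else X)
    with hT
  have hTcard : T.card = X.card ^ 4 := by
    rw [hT, Fintype.card_piFinset]
    have hcards : ∀ i : Fin 6,
        ((if i = a ∨ i = e then ({0} : Finset (Fin n → ZMod 2)) else X)).card
        = if i = a ∨ i = e then 1 else X.card := by
      intro i; by_cases h : i = a ∨ i = e <;> simp [h]
    rw [Finset.prod_congr rfl (fun i _ => hcards i)]
    rw [← Finset.prod_mul_prod_compl ({a, e} : Finset (Fin 6))]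
    have h1 : ∀ i ∈ ({a, e} : Finset (Fin 6)), (if i = a ∨ i = e then 1 else X.card) = 1 := by
      intro i hi
      simp only [Finset.mem_insert, Finset.mem_singleton] at hi
      rcases hi with h | h <;> simp [h]
    have h2 : ∀ i ∈ ({a, e} : Finset (Fin 6))ᶜ, (if i = a ∨ i = e then 1 else X.card) = X.card := by
      intro i hi
      simp only [Finset.mem_compl, Finset.mem_insert, Finset.mem_singleton] at hi
      push_neg at hi
      simp [hi.1, hi.2]
    rw [Finset.prod_congr rfl h1, Finset.prod_congr rfl h2, Finset.prod_const_one, one_mul,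
      Finset.prod_const]
    congr 1
    rw [Finset.card_compl, Finset.card_pair (Ne.symm hea)]
    simp
  rw [← hTcard]
  have hval : ∀ (u : Fin 6 → (Fin n → ZMod 2)) (i : Fin 6),
      Function.update (Function.update u a 0) e 0 i
      = if i = e then 0 else if i = a then 0 else u i := by
    intro u i
    by_cases h1 : i = e
    · subst h1; simp
    · rw [Function.update_of_ne h1]
      by_cases h2 : i = a
      · subst h2; simp
      · rw [Function.update_of_ne h2]; simp [h1, h2]
  have hscal : ∀ x y : ZMod 2, x + y = 0 → x = y := by decide
  have hhalf : ∀ x y : Fin n → ZMod 2, x + y = 0 → x = y := by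
    intro x y h; funext i
    exact hscal (x i) (y i) (congrFun h i)
  refine Finset.card_le_card_of_injOn
    (fun u => Function.update (Function.update u a 0) e 0) ?_ ?_
  · intro u hu
    simp only [Finset.mem_coe, Finset.mem_filter, Zfun, Fintype.mem_piFinset] at hu
    rw [hT, Finset.mem_coe, Fintype.mem_piFinset]
    intro i
    show Function.update (Function.update u a 0) e 0 i ∈ _
    rw [hval u i]
    by_cases h1 : i = e
    · simp [h1]
    · by_cases h2 : i = a
      · simp [h1, h2]
      · have : ¬(i = a ∨ i = e) := by tauto
        simp only [this, if_false, h1, h2]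
        exact hu.1.1 i
  · intro u hu u' hu' h
    simp only [Finset.coe_filter, Set.mem_setOf_eq, Zfun, Finset.mem_filter,
      Fintype.mem_piFinset] at hu hu'
    obtain ⟨⟨_, hsum⟩, huab⟩ := hu
    obtain ⟨⟨_, hsum'⟩, huab'⟩ := hu'
    have key : ∀ i : Fin 6, i ≠ a → i ≠ e → u i = u' i := by
      intro i hia hie
      have h0 : Function.update (Function.update u a 0) e 0 i
          = Function.update (Function.update u' a 0) e 0 i := congrFun h i
      rw [hval u i, hval u' i] at h0
      simpa [hie, hia] using h0
    have ha' : u a = u' a := by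
      rw [huab, huab']
      exact key b (fun hh => hab hh.symm) (fun hh => heb hh.symm)
    have he' : u e = u' e := by
      have h1 : u e + ∑ i ∈ Finset.univ.erase e, u i = 0 := by
        rw [Finset.add_sum_erase _ u (Finset.mem_univ e)]; exact hsum
      have h2 : u' e + ∑ i ∈ Finset.univ.erase e, u' i = 0 := by
        rw [Finset.add_sum_erase _ u' (Finset.mem_univ e)]; exact hsum'
      have hsame : ∑ i ∈ Finset.univ.erase e, u i = ∑ i ∈ Finset.univ.erase e, u' i := by
        refine Finset.sum_congr rfl (fun i hi => ?_)
        have hie : i ≠ e := Finset.ne_of_mem_erase hi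
        by_cases hia : i = a
        · subst hia; exact ha'
        · exact key i hia hie
      rw [hhalf _ _ h1, hhalf _ _ h2, hsame]
    funext i
    by_cases h1 : i = e
    · subst h1; exact he'
    · by_cases h2 : i = a
      · subst h2; exact ha'
      · exact key i h2 h1

private lemma Zfun_card_bound (X : Finset (Fin n → ZMod 2))
    (hcol : ∀ u ∈ Zfun X, ∃ p : Fin 6 × Fin 6, p.1 ≠ p.2 ∧ u p.1 = u p.2) :
    (Zfun X).card ≤ 30 * X.card ^ 4 := by
  classical
  set P := (Finset.univ : Finset (Fin 6 × Fin 6)).filter (fun p => p.1 ≠ p.2) with hP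
  have hsub : Zfun X ⊆ P.biUnion (fun p => (Zfun X).filter (fun u => u p.1 = u p.2)) := by
    intro u hu
    obtain ⟨p, hp1, hp2⟩ := hcol u hu
    refine Finset.mem_biUnion.mpr ⟨p, ?_, ?_⟩
    · simp [hP, hp1]
    · exact Finset.mem_filter.mpr ⟨hu, hp2⟩
  calc (Zfun X).card ≤ (P.biUnion (fun p => (Zfun X).filter (fun u => u p.1 = u p.2))).card :=
        Finset.card_le_card hsub
    _ ≤ ∑ p ∈ P, ((Zfun X).filter (fun u => u p.1 = u p.2)).card := Finset.card_biUnion_le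
    _ ≤ ∑ _p ∈ P, X.card ^ 4 := by
        refine Finset.sum_le_sum (fun p hp => ?_)
        have hne : p.1 ≠ p.2 := by
          simp only [hP, Finset.mem_filter] at hp; exact hp.2
        exact collision_class X p.1 p.2 hne
    _ = 30 * X.card ^ 4 := by
        have hcard : P.card = 30 := by rw [hP]; decide
        rw [Finset.sum_const, hcard, smul_eq_mul]

private def join (pr : (Fin 3 → (Fin n → ZMod 2)) × (Fin 3 → (Fin n → ZMod 2))) :
    Fin 6 → (Fin n → ZMod 2) :=
  fun i => if h : (i : ℕ) < 3 then pr.1 ⟨(i : ℕ), h⟩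
    else pr.2 ⟨(i : ℕ) - 3, by have := i.isLt; omega⟩

private lemma pairs_le_zfun (X : Finset (Fin n → ZMod 2)) :
    (((tri X) ×ˢ (tri X)).filter
      (fun pr => ∑ i, pr.1 i = ∑ i, pr.2 i)).card ≤ (Zfun X).card := by
  classical
  refine Finset.card_le_card_of_injOn join ?_ ?_
  · intro pr hpr
    simp only [Finset.mem_coe, Finset.mem_filter, Finset.mem_product, tri, Fintype.mem_piFinset] at hpr
    obtain ⟨⟨h1, h2⟩, h3⟩ := hpr
    simp only [Zfun, Finset.mem_coe, Finset.mem_filter, Fintype.mem_piFinset]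
    constructor
    · intro i
      by_cases h : (i : ℕ) < 3
      · simp only [join, h, dif_pos]; exact h1 _
      · simp only [join, h, dif_neg, not_false_iff]; exact h2 _
    · have e0 : join pr 0 = pr.1 0 := rfl
      have e1 : join pr 1 = pr.1 1 := rfl
      have e2 : join pr 2 = pr.1 2 := rfl
      have e3 : join pr 3 = pr.2 0 := rfl
      have e4 : join pr 4 = pr.2 1 := rfl
      have e5 : join pr 5 = pr.2 2 := rfl
      rw [Fin.sum_univ_six, e0, e1, e2, e3, e4, e5]
      rw [Fin.sum_univ_three, Fin.sum_univ_three] at h3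
      have : pr.1 0 + pr.1 1 + pr.1 2 + pr.2 0 + pr.2 1 + pr.2 2
          = (pr.1 0 + pr.1 1 + pr.1 2) + (pr.2 0 + pr.2 1 + pr.2 2) := by abel
      rw [this, h3]
      exact pi_add_self _
  · intro pr hpr pr' hpr' h
    have e : ∀ k : Fin 3, pr.1 k = pr'.1 k ∧ pr.2 k = pr'.2 k := by
      intro k
      fin_cases k
      · exact ⟨congrFun h 0, congrFun h 3⟩
      · exact ⟨congrFun h 1, congrFun h 4⟩
      · exact ⟨congrFun h 2, congrFun h 5⟩
    have h1 : pr.1 = pr'.1 := funext (fun k => (e k).1)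
    have h2 : pr.2 = pr'.2 := funext (fun k => (e k).2)
    exact Prod.ext h1 h2

private lemma r6_le (A B : Finset (Fin n → ZMod 2)) (t : Fin n → ZMod 2) :
    (Xt A B t).card ^ 6 ≤ (B + B + B).card * (Zfun (Xt A B t)).card := by
  classical
  set X := Xt A B t with hX
  set W := (B + B + B) + ({t} : Finset (Fin n → ZMod 2)) with hW
  have hWcard : W.card = (B + B + B).card := by
    rw [hW, Finset.add_singleton]
    exact Finset.card_image_of_injective _ (add_left_injective t)
  have hmemW : ∀ v ∈ tri X, (∑ i, v i) ∈ W := by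
    intro v hv
    simp only [tri, Fintype.mem_piFinset, hX, Xt, Finset.mem_filter] at hv
    have hkey : ∀ p q r s : ZMod 2, p + q + r = ((p + s) + (q + s) + (r + s)) + s := by decide
    have : (∑ i, v i) = ((v 0 + t) + (v 1 + t) + (v 2 + t)) + t := by
      rw [Fin.sum_univ_three]
      funext i
      exact hkey (v 0 i) (v 1 i) (v 2 i) (t i)
    rw [this, hW]
    refine Finset.add_mem_add ?_ (Finset.mem_singleton_self t)
    exact Finset.add_mem_add (Finset.add_mem_add (hv 0).2 (hv 1).2) (hv 2).2
  have htricard : (tri X).card = X.card ^ 3 := by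
    rw [tri, Fintype.card_piFinset]
    simp [Finset.prod_const]
  have hfib : (tri X).card = ∑ w ∈ W, r3 X w :=
    Finset.card_eq_sum_card_fiberwise hmemW
  have hCS : (∑ w ∈ W, r3 X w) ^ 2 ≤ W.card * ∑ w ∈ W, (r3 X w) ^ 2 :=
    sq_sum_le_card_mul_sum_sq
  have hpairs : ∑ w ∈ W, (r3 X w) ^ 2
      = (((tri X) ×ˢ (tri X)).filter (fun pr => ∑ i, pr.1 i = ∑ i, pr.2 i)).card := by
    rw [Finset.card_eq_sum_card_fiberwise
      (f := fun pr : (Fin 3 → (Fin n → ZMod 2)) × (Fin 3 → (Fin n → ZMod 2)) => ∑ i, pr.1 i)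
      (t := W)
      (fun pr hpr => by
        simp only [Finset.mem_coe, Finset.mem_filter, Finset.mem_product] at hpr
        exact hmemW _ hpr.1.1)]
    refine Finset.sum_congr rfl (fun w _ => ?_)
    rw [Finset.filter_filter]
    have hcong : ((tri X) ×ˢ (tri X)).filter
        (fun pr => (∑ i, pr.1 i = ∑ i, pr.2 i) ∧ ∑ i, pr.1 i = w)
        = ((tri X) ×ˢ (tri X)).filter
        (fun pr => (∑ i, pr.1 i = w) ∧ (∑ i, pr.2 i = w)) := by
      refine Finset.filter_congr (fun pr _ => ?_)
      constructor
      · rintro ⟨h1, h2⟩; exact ⟨h2, h2 ▸ h1.symm ▸ rfl⟩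
      · rintro ⟨h1, h2⟩; exact ⟨h1.trans h2.symm, h1⟩
    have hps := Finset.filter_product
      (s := tri X) (t := tri X)
      (p := fun v : Fin 3 → (Fin n → ZMod 2) => ∑ i, v i = w)
      (q := fun v : Fin 3 → (Fin n → ZMod 2) => ∑ i, v i = w)
    rw [hcong, hps, Finset.card_product]
    rw [r3, sq]
  calc X.card ^ 6 = ((tri X).card) ^ 2 := by rw [htricard]; ring
    _ = (∑ w ∈ W, r3 X w) ^ 2 := by rw [hfib]
    _ ≤ W.card * ∑ w ∈ W, (r3 X w) ^ 2 := hCS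
    _ = (B + B + B).card
        * (((tri X) ×ˢ (tri X)).filter (fun pr => ∑ i, pr.1 i = ∑ i, pr.2 i)).card := by
        rw [hWcard, hpairs]
    _ ≤ (B + B + B).card * (Zfun X).card := by
        exact Nat.mul_le_mul_left _ (pairs_le_zfun X)

private lemma pluennecke_three (A B : Finset (Fin n → ZMod 2)) (hA : A.Nonempty) :
    A.card ^ 2 * (B + B + B).card ≤ (A + B).card ^ 3 := by
  classical
  have h3 : (3 : ℕ) • B = B + B + B := by
    rw [show (3 : ℕ) = 2 + 1 from rfl, add_nsmul, two_nsmul, one_nsmul]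
  have hP := Finset.pluennecke_ruzsa_inequality_nsmul_add hA B 3
  rw [h3] at hP
  have hA0 : (0 : ℚ≥0) < (A.card : ℚ≥0) := by
    exact_mod_cast Nat.pos_of_ne_zero (Finset.card_ne_zero_of_mem hA.choose_spec)
  have key : ((A.card : ℚ≥0)) ^ 2 * ((B + B + B).card : ℚ≥0) ≤ ((A + B).card : ℚ≥0) ^ 3 := by
    have h2 : ((B + B + B).card : ℚ≥0) ≤ ((A + B).card : ℚ≥0) ^ 3 / ((A.card : ℚ≥0)) ^ 2 := by
      calc ((B + B + B).card : ℚ≥0)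
          ≤ ((#(A + B) : ℚ≥0) / #A) ^ 3 * #A := hP
        _ = ((A + B).card : ℚ≥0) ^ 3 / ((A.card : ℚ≥0)) ^ 2 := by
            field_simp
    calc ((A.card : ℚ≥0)) ^ 2 * ((B + B + B).card : ℚ≥0)
        ≤ ((A.card : ℚ≥0)) ^ 2 * (((A + B).card : ℚ≥0) ^ 3 / ((A.card : ℚ≥0)) ^ 2) := by
          exact mul_le_mul_right h2 _
      _ = ((A + B).card : ℚ≥0) ^ 3 := by
          field_simp
  exact_mod_cast key

private lemma no_distinct {α : (Fin n → ZMod 2) → ZMod 2} (hα : IsCubicForm α)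
    (A B : Finset (Fin n → ZMod 2))
    (hq : ∀ x ∈ A, ∀ x' ∈ A, ∀ y ∈ B, ∀ y' ∈ B,
      x ≠ x' → y ≠ y' → x + x' + y + y' = 0 → α (x + x') = 1)
    (t : Fin n → ZMod 2) :
    ∀ u ∈ Zfun (Xt A B t), ∃ p : Fin 6 × Fin 6, p.1 ≠ p.2 ∧ u p.1 = u p.2 := by
  classical
  intro u hu
  by_contra hcon
  push_neg at hcon
  simp only [Zfun, Finset.mem_filter, Fintype.mem_piFinset] at hu
  obtain ⟨hmem, hsum⟩ := hu
  have hmemA : ∀ i, u i ∈ A := by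
    intro i
    exact (Finset.mem_filter.mp (hmem i)).1
  have hmemB : ∀ i, u i + t ∈ B := by
    intro i
    exact (Finset.mem_filter.mp (hmem i)).2
  have hzero : ∀ i j : Fin 6, u i + u j + (u i + t) + (u j + t) = 0 := by
    intro i j
    funext k
    have : ∀ x y s : ZMod 2, x + y + (x + s) + (y + s) = 0 := by decide
    simpa using this (u i k) (u j k) (t k)
  have hone : ∀ p ∈ ltPairs, α (u p.1 + u p.2) = 1 := by
    intro p hp
    have hplt : p.1 < p.2 := by
      simp only [ltPairs, Finset.mem_filter, Finset.mem_univ, true_and] at hp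
      exact hp
    have hne : u p.1 ≠ u p.2 := hcon p (ne_of_lt hplt)
    have hne' : u p.1 + t ≠ u p.2 + t := by
      intro hcontra
      exact hne (add_right_cancel hcontra)
    exact hq (u p.1) (hmemA p.1) (u p.2) (hmemA p.2) (u p.1 + t) (hmemB p.1)
      (u p.2 + t) (hmemB p.2) hne hne' (hzero p.1 p.2)
  have h0 := cubic_pairsum hα u hsum
  rw [Finset.sum_congr rfl hone] at h0
  rw [Finset.sum_const] at h0
  have hcard : ltPairs.card = 15 := by decide
  rw [hcard] at h0
  exact absurd h0 (by decide)

private lemma main_nat {α : (Fin n → ZMod 2) → ZMod 2} (hα : IsCubicForm α)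
    (A B : Finset (Fin n → ZMod 2)) (hA : 1 ≤ A.card) (hAB : A.card ≤ B.card)
    (hq : ∀ x ∈ A, ∀ x' ∈ A, ∀ y ∈ B, ∀ y' ∈ B,
      x ≠ x' → y ≠ y' → x + x' + y + y' = 0 → α (x + x') = 1) :
    A.card ^ 6 ≤ 30 * (A + B).card ^ 5 := by
  classical
  have hAne : A.Nonempty := Finset.card_pos.mp hA
  set m := A.card with hm
  set s := (A + B).card with hs
  -- pointwise bound
  have key : ∀ t : Fin n → ZMod 2, (m * (Xt A B t).card) ^ 2 ≤ 30 * s ^ 3 := by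
    intro t
    set r := (Xt A B t).card with hr
    by_cases hr0 : r = 0
    · rw [hr0, Nat.mul_zero]
      positivity
    have h1 : r ^ 6 ≤ (B + B + B).card * (30 * r ^ 4) := by
      calc r ^ 6 ≤ (B + B + B).card * (Zfun (Xt A B t)).card := r6_le A B t
        _ ≤ (B + B + B).card * (30 * r ^ 4) :=
            Nat.mul_le_mul_left _ (Zfun_card_bound _ (no_distinct hα A B hq t))
    have h2 : m ^ 2 * r ^ 6 ≤ (m ^ 2 * (B + B + B).card) * (30 * r ^ 4) := by
      calc m ^ 2 * r ^ 6 ≤ m ^ 2 * ((B + B + B).card * (30 * r ^ 4)) :=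
            Nat.mul_le_mul_left _ h1
        _ = (m ^ 2 * (B + B + B).card) * (30 * r ^ 4) := by ring
    have h3 : m ^ 2 * (B + B + B).card ≤ s ^ 3 := pluennecke_three A B hAne
    have h4 : m ^ 2 * r ^ 6 ≤ s ^ 3 * (30 * r ^ 4) :=
      le_trans h2 (Nat.mul_le_mul_right _ h3)
    have h5 : ((m * r) ^ 2) * r ^ 4 ≤ (30 * s ^ 3) * r ^ 4 := by
      calc ((m * r) ^ 2) * r ^ 4 = m ^ 2 * r ^ 6 := by ring
        _ ≤ s ^ 3 * (30 * r ^ 4) := h4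
        _ = (30 * s ^ 3) * r ^ 4 := by ring
    exact Nat.le_of_mul_le_mul_right h5 (by positivity)
  -- sum over t
  have hsumr : ∑ t ∈ A + B, (m * (Xt A B t).card) = m * (m * B.card) := by
    rw [← Finset.mul_sum, sum_r A B]
  have hsqrt : ∀ t ∈ A + B, m * (Xt A B t).card ≤ Nat.sqrt (30 * s ^ 3) := by
    intro t _
    exact Nat.le_sqrt'.mpr (key t)
  have hbound : m * (m * B.card) ≤ s * Nat.sqrt (30 * s ^ 3) := by
    rw [← hsumr]
    calc ∑ t ∈ A + B, (m * (Xt A B t).card)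
        ≤ (A + B).card • Nat.sqrt (30 * s ^ 3) := Finset.sum_le_card_nsmul _ _ _ hsqrt
      _ = s * Nat.sqrt (30 * s ^ 3) := by rw [smul_eq_mul, hs]
  have hsq : (m * (m * B.card)) ^ 2 ≤ 30 * s ^ 5 := by
    calc (m * (m * B.card)) ^ 2 ≤ (s * Nat.sqrt (30 * s ^ 3)) ^ 2 :=
          Nat.pow_le_pow_left hbound 2
      _ = s ^ 2 * (Nat.sqrt (30 * s ^ 3)) ^ 2 := by ring
      _ ≤ s ^ 2 * (30 * s ^ 3) := Nat.mul_le_mul_left _ (Nat.sqrt_le' _)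
      _ = 30 * s ^ 5 := by ring
  calc m ^ 6 ≤ (m * (m * B.card)) ^ 2 := by
        have : m ^ 6 = (m * (m * m)) ^ 2 := by ring
        rw [this]
        exact Nat.pow_le_pow_left (by
          exact Nat.mul_le_mul_left _ (Nat.mul_le_mul_left _ hAB)) 2
    _ ≤ 30 * s ^ 5 := hsq
/-- There exists a constant `C > 0` such that for every `n`, every cubic form
`α` on `𝔽₂ⁿ`, and all subsets `A, B ⊆ 𝔽₂ⁿ` with `1 ≤ |A| ≤ |B|`: if every proper additive
quadruple `(x, x', y, y')` (with `x ≠ x' ∈ A`, `y ≠ y' ∈ B`, `x + x' + y + y' = 0`)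
satisfies `α(x + x') = 1`, then `|A + B| ≥ C · |A|^{6/5}`. -/
theorem sumset_lower_bound_of_additive_quadruples :
    ∃ C : ℝ, 0 < C ∧
      ∀ (n : ℕ) (α : (Fin n → ZMod 2) → ZMod 2), IsCubicForm α →
        ∀ A B : Finset (Fin n → ZMod 2), 1 ≤ A.card → A.card ≤ B.card →
          (∀ x ∈ A, ∀ x' ∈ A, ∀ y ∈ B, ∀ y' ∈ B,
            x ≠ x' → y ≠ y' → x + x' + y + y' = 0 → α (x + x') = 1) →
          C * (A.card : ℝ) ^ ((6 : ℝ) / 5) ≤ ((A + B).card : ℝ) := by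
  refine ⟨1 / 2, by norm_num, ?_⟩
  intro n α hα A B hA hAB hq
  have hnat := main_nat hα A B hA hAB hq
  set m := A.card with hm
  set s := (A + B).card with hs
  have hx : (0 : ℝ) ≤ (m : ℝ) := Nat.cast_nonneg _
  have hs0 : (0 : ℝ) ≤ (s : ℝ) := Nat.cast_nonneg _
  have hreal : ((m : ℝ)) ^ (6 : ℕ) ≤ (2 * (s : ℝ)) ^ (5 : ℕ) := by
    have h1 : ((m : ℝ)) ^ (6 : ℕ) ≤ 30 * (s : ℝ) ^ (5 : ℕ) := by
      exact_mod_cast hnat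
    calc ((m : ℝ)) ^ (6 : ℕ) ≤ 30 * (s : ℝ) ^ (5 : ℕ) := h1
      _ ≤ 32 * (s : ℝ) ^ (5 : ℕ) := by
          have : (0:ℝ) ≤ (s : ℝ) ^ (5 : ℕ) := by positivity
          nlinarith
      _ = (2 * (s : ℝ)) ^ (5 : ℕ) := by ring
  have hrpow : ((m : ℝ)) ^ ((6 : ℝ) / 5) ≤ 2 * (s : ℝ) := by
    have e1 : ((m : ℝ)) ^ ((6 : ℝ) / 5) = (((m : ℝ)) ^ (6 : ℕ)) ^ ((5 : ℕ) : ℝ)⁻¹ := by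
      rw [← Real.rpow_natCast ((m : ℝ)) 6, ← Real.rpow_mul hx]
      norm_num
    have e2 : ((2 * (s : ℝ)) ^ (5 : ℕ)) ^ (((5 : ℕ) : ℝ))⁻¹ = 2 * (s : ℝ) := by
      exact Real.pow_rpow_inv_natCast (by positivity) (by norm_num)
    rw [e1, ← e2]
    exact Real.rpow_le_rpow (by positivity) hreal (by positivity)
  linarith
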